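/- Let τ > 0, let 0 ≤ ζ ≤ √3 and let d be a real number with d² ≤ 2ζ(1 − ζ²/3). Let θ : [0,∞) → ℝ be twice continuously differentiable with θ''(t) + τ·θ'(t) + θ(t)² − 1 = 0 for all t ≥ 0, θ(0) = ζ and θ'(0) = d. Then θ(t) → 1 as t → ∞. -/

import Mathlib

open Set Filter

/-- Monotone from nonneg derivative on a subinterval of `Ici 0`. -/
lemma mono_aux (f g : ℝ → ℝ)
    (hf : ∀ t ∈ Ici (0:ℝ), HasDerivWithinAt f (g t) (Ici 0) t)
    (a b : ℝ) (ha : 0 ≤ a) (hab : a ≤ b)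
    (hg : ∀ t ∈ Icc a b, 0 ≤ g t) : f a ≤ f b := by
  have hsub : Icc a b ⊆ Ici (0:ℝ) := fun t ht => le_trans ha ht.1
  have hmono : MonotoneOn f (Icc a b) := by
    apply monotoneOn_of_deriv_nonneg (convex_Icc a b)
    · exact fun t ht => ((hf t (hsub ht)).continuousWithinAt).mono hsub
    · intro t ht
      rw [interior_Icc] at ht
      have h0t : (0:ℝ) < t := lt_of_le_of_lt ha ht.1
      exact ((hf t h0t.le).hasDerivAt (Ici_mem_nhds h0t)).differentiableAt.differentiableWithinAt
    · intro t ht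
      rw [interior_Icc] at ht
      have h0t : (0:ℝ) < t := lt_of_le_of_lt ha ht.1
      rw [((hf t h0t.le).hasDerivAt (Ici_mem_nhds h0t)).deriv]
      exact hg t (mem_Icc.mpr ⟨ht.1.le, ht.2.le⟩)
  exact hmono (left_mem_Icc.mpr hab) (right_mem_Icc.mpr hab) hab

/-- One-sided Barbalat: if `H' = h`, `h' ≥ -K`, and `H` converges, then eventually `h < ε`. -/
lemma key_one (h h' H : ℝ → ℝ) (K L ε : ℝ) (hK : 0 < K) (hε : 0 < ε)
    (hH : ∀ t ∈ Ici (0:ℝ), HasDerivWithinAt H (h t) (Ici 0) t)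
    (hh : ∀ t ∈ Ici (0:ℝ), HasDerivWithinAt h (h' t) (Ici 0) t)
    (hb : ∀ t ∈ Ici (0:ℝ), -K ≤ h' t)
    (hL : Tendsto H atTop (nhds L)) :
    ∀ᶠ t in atTop, h t < ε := by
  set δ : ℝ := ε / (2 * K) with hδ
  have hδpos : 0 < δ := div_pos hε (by linarith)
  have hc : (0:ℝ) < ε * δ / 4 := by positivity
  obtain ⟨T, hT⟩ := (Metric.tendsto_atTop.mp hL) (ε * δ / 4) hc
  filter_upwards [eventually_ge_atTop (max T 0)] with t₀ ht₀
  by_contra hcon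
  push_neg at hcon
  have ht₀0 : (0:ℝ) ≤ t₀ := le_trans (le_max_right T 0) ht₀
  have ht₀T : T ≤ t₀ := le_trans (le_max_left T 0) ht₀
  -- Step 1 : h stays ≥ ε/2 on [t₀, t₀ + δ]
  have step1 : ∀ s ∈ Icc t₀ (t₀ + δ), ε / 2 ≤ h s := by
    intro s hs
    have hs0 : 0 ≤ s := le_trans ht₀0 hs.1
    have key : h t₀ + K * t₀ ≤ h s + K * s := by
      apply mono_aux (fun t => h t + K * t) (fun t => h' t + K)
      · intro t ht
        exact (hh t ht).add (by simpa using ((hasDerivAt_id t).const_mul K).hasDerivWithinAt)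
      · exact ht₀0
      · exact hs.1
      · intro u hu
        have := hb u (le_trans ht₀0 hu.1)
        linarith
    have hsub : s - t₀ ≤ δ := by linarith [hs.2]
    have : K * (s - t₀) ≤ K * δ := by
      apply mul_le_mul_of_nonneg_left hsub hK.le
    have hKδ : K * δ = ε / 2 := by
      rw [hδ]; field_simp
    linarith
  -- Step 2 : H increases by at least (ε/2) * δ
  have step2 : H t₀ - ε / 2 * t₀ ≤ H (t₀ + δ) - ε / 2 * (t₀ + δ) := by
    apply mono_aux (fun t => H t - ε / 2 * t) (fun t => h t - ε / 2)
    · intro t ht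
      exact (hH t ht).sub (by simpa using ((hasDerivAt_id t).const_mul (ε/2)).hasDerivWithinAt)
    · exact ht₀0
    · linarith
    · intro u hu
      linarith [step1 u hu]
  -- Step 3 : contradiction with Cauchy bound
  have h1 := hT t₀ ht₀T
  have h2 := hT (t₀ + δ) (by linarith)
  rw [Real.dist_eq] at h1 h2
  have a1 : |H t₀ - L| < ε * δ / 4 := h1
  have a2 : |H (t₀ + δ) - L| < ε * δ / 4 := h2
  have b1 := abs_lt.mp a1
  have b2 := abs_lt.mp a2
  have : ε / 2 * δ ≤ H (t₀ + δ) - H t₀ := by linarith [step2]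
  have hεδ : 0 < ε * δ := by positivity
  linarith [b1.1, b1.2, b2.1, b2.2]

/-- Barbalat-type lemma: if `H' = h`, `|h'| ≤ K`, and `H` converges, then `h → 0`. -/
lemma key_lemma (h h' H : ℝ → ℝ) (K L : ℝ) (hK : 0 < K)
    (hH : ∀ t ∈ Ici (0:ℝ), HasDerivWithinAt H (h t) (Ici 0) t)
    (hh : ∀ t ∈ Ici (0:ℝ), HasDerivWithinAt h (h' t) (Ici 0) t)
    (hb : ∀ t ∈ Ici (0:ℝ), |h' t| ≤ K)
    (hL : Tendsto H atTop (nhds L)) :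
    Tendsto h atTop (nhds 0) := by
  rw [Metric.tendsto_atTop]
  intro ε hε
  have hpos := key_one h h' H K L ε hK hε hH hh
    (fun t ht => by linarith [(abs_le.mp (hb t ht)).1]) hL
  have hneg := key_one (fun t => -h t) (fun t => -h' t) (fun t => -H t) K (-L) ε hK hε
    (fun t ht => (hH t ht).neg) (fun t ht => (hh t ht).neg)
    (fun t ht => by show -K ≤ -h' t; linarith [(abs_le.mp (hb t ht)).2]) hL.neg
  obtain ⟨T, hT⟩ := (hpos.and hneg).exists_forall_of_atTop
  refine ⟨T, fun t ht => ?_⟩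
  obtain ⟨p1, p2⟩ := hT t ht
  replace p2 : -h t < ε := p2
  rw [Real.dist_eq, sub_zero]
  exact abs_lt.mpr ⟨by linarith, p1⟩

set_option maxHeartbeats 1000000 in
theorem stmt_7 (τ ζ d : ℝ) (hτ : 0 < τ) (hζ0 : 0 ≤ ζ) (hζ3 : ζ ≤ Real.sqrt 3)
    (hd : d ^ 2 ≤ 2 * ζ * (1 - ζ ^ 2 / 3)) (θ θ' θ'' : ℝ → ℝ)
    (hd1 : ∀ t ∈ Ici (0 : ℝ), HasDerivWithinAt θ (θ' t) (Ici 0) t)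
    (hd2 : ∀ t ∈ Ici (0 : ℝ), HasDerivWithinAt θ' (θ'' t) (Ici 0) t)
    (hc : ContinuousOn θ'' (Ici 0))
    (heq : ∀ t : ℝ, 0 ≤ t → θ'' t + τ * θ' t + (θ t) ^ 2 - 1 = 0)
    (h0 : θ 0 = ζ) (h0' : θ' 0 = d) :
    Tendsto θ atTop (nhds 1) := by
  have sqrt3 : Real.sqrt 3 ^ 2 = 3 := Real.sq_sqrt (by norm_num)
  have sqrt3nn : 0 ≤ Real.sqrt 3 := Real.sqrt_nonneg 3
  -- The energy function
  set E : ℝ → ℝ := fun t => θ' t ^ 2 / 2 + θ t ^ 3 / 3 - θ t with hEdef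
  have hE : ∀ t ∈ Ici (0:ℝ), HasDerivWithinAt E (-(τ * θ' t ^ 2)) (Ici 0) t := by
    intro t ht
    have h2 := ((((hd2 t ht).pow 2).div_const 2).add (((hd1 t ht).pow 3).div_const 3)).sub
      (hd1 t ht)
    refine h2.congr_deriv ?_
    have h3 := heq t ht
    push_cast
    linear_combination (θ' t) * h3
  have hEanti : ∀ s t : ℝ, 0 ≤ s → s ≤ t → E t ≤ E s := by
    intro s t hs hst
    have := mono_aux (fun u => -E u) (fun u => τ * θ' u ^ 2)
      (fun u hu => by have h := (hE u hu).neg; rw [neg_neg] at h; exact h) s t hs hst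
      (fun u _ => by positivity)
    linarith
  have hE0 : E 0 ≤ 0 := by
    simp only [hEdef, h0, h0']
    nlinarith
  have hEneg : ∀ t : ℝ, 0 ≤ t → E t ≤ 0 := fun t ht => le_trans (hEanti 0 t le_rfl ht) hE0
  have hV : ∀ t : ℝ, 0 ≤ t → θ t ^ 3 / 3 - θ t ≤ 0 := by
    intro t ht
    have h1 := hEneg t ht
    simp only [hEdef] at h1
    nlinarith [sq_nonneg (θ' t)]
  -- bounds on θ
  have hub : ∀ t : ℝ, 0 ≤ t → θ t ≤ Real.sqrt 3 := by
    intro t ht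
    by_contra hcon
    push_neg at hcon
    have hθpos : 0 < θ t := lt_of_le_of_lt sqrt3nn hcon
    have h2 : 3 < θ t ^ 2 := by
      nlinarith [mul_pos (sub_pos.mpr hcon) (by linarith : (0:ℝ) < θ t + Real.sqrt 3)]
    nlinarith [hV t ht, mul_pos hθpos (by linarith : (0:ℝ) < θ t ^ 2 - 3)]
  have hlb : ∀ t : ℝ, 0 ≤ t → 0 ≤ θ t := by
    intro t ht
    by_contra hcon
    push_neg at hcon
    have hone : (1:ℝ) ≤ Real.sqrt 3 := by nlinarith [sqrt3, sqrt3nn]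
    have hnot : θ t ≤ -Real.sqrt 3 := by
      by_contra hcon2
      push_neg at hcon2
      have h2 : θ t ^ 2 < 3 := by
        nlinarith [mul_pos (by linarith : (0:ℝ) < Real.sqrt 3 + θ t)
          (by linarith : (0:ℝ) < Real.sqrt 3 - θ t)]
      nlinarith [hV t ht, mul_pos_of_neg_of_neg hcon (by linarith : θ t ^ 2 - 3 < 0)]
    have hcont : ContinuousOn θ (Icc 0 t) := by
      intro u hu
      exact ((hd1 u hu.1).continuousWithinAt).mono (fun v hv => hv.1)
    have hIVT := intermediate_value_Icc' ht hcont
    have hm : (-1:ℝ) ∈ Icc (θ t) (θ 0) := ⟨by linarith, by rw [h0]; linarith⟩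
    obtain ⟨s, hs, hθs⟩ := hIVT hm
    have := hV s hs.1
    rw [hθs] at this
    norm_num at this
  -- quantitative bounds
  have hθ2 : ∀ t : ℝ, 0 ≤ t → θ t ^ 2 ≤ 3 := by
    intro t ht
    nlinarith [mul_self_le_mul_self (hlb t ht) (hub t ht), sqrt3]
  have hdsq : ∀ t : ℝ, 0 ≤ t → θ' t ^ 2 ≤ 2 := by
    intro t ht
    have h1 := hEneg t ht
    simp only [hEdef] at h1
    nlinarith [mul_nonneg (sq_nonneg (θ t - 1)) (by linarith [hlb t ht] : (0:ℝ) ≤ θ t + 2)]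
  have hθ'hi : ∀ t : ℝ, 0 ≤ t → θ' t ≤ 2 := fun t ht => by
    nlinarith [hdsq t ht, sq_nonneg (θ' t - 2)]
  have hθ'lo : ∀ t : ℝ, 0 ≤ t → -2 ≤ θ' t := fun t ht => by
    nlinarith [hdsq t ht, sq_nonneg (θ' t + 2)]
  have hθ''hi : ∀ t : ℝ, 0 ≤ t → θ'' t ≤ 4 + 2 * τ := by
    intro t ht
    have h3 := heq t ht
    have h4 := mul_le_mul_of_nonneg_left (hθ'lo t ht) hτ.le
    nlinarith [sq_nonneg (θ t)]
  have hθ''lo : ∀ t : ℝ, 0 ≤ t → -(4 + 2 * τ) ≤ θ'' t := by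
    intro t ht
    have h3 := heq t ht
    have h4 := mul_le_mul_of_nonneg_left (hθ'hi t ht) hτ.le
    nlinarith [hθ2 t ht]
  -- convergence of the energy
  have hElb : ∀ t : ℝ, 0 ≤ t → -1 ≤ E t := by
    intro t ht
    simp only [hEdef]
    nlinarith [sq_nonneg (θ' t),
      mul_nonneg (sq_nonneg (θ t - 1)) (by linarith [hlb t ht] : (0:ℝ) ≤ θ t + 2)]
  set E2 : ℝ → ℝ := fun t => E (max t 0) with hE2def
  have hanti2 : Antitone E2 := fun s t hst =>
    hEanti (max s 0) (max t 0) (le_max_right s 0) (max_le_max hst le_rfl)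
  have hbdd : BddBelow (Set.range E2) := by
    refine ⟨-1, fun x hx => ?_⟩
    obtain ⟨t, rfl⟩ := hx
    exact hElb (max t 0) (le_max_right t 0)
  have hEtendsto : Tendsto E atTop (nhds (⨅ t, E2 t)) := by
    refine (tendsto_atTop_ciInf hanti2 hbdd).congr' ?_
    filter_upwards [eventually_ge_atTop (0:ℝ)] with t ht
    simp [hE2def, max_eq_left ht]
  -- first Barbalat application : θ'^2 → 0
  have hH1 : ∀ t ∈ Ici (0:ℝ), HasDerivWithinAt (fun u => -E u / τ) (θ' t ^ 2) (Ici 0) t := by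
    intro t ht
    have h1 := (hE t ht).neg.div_const τ
    refine h1.congr_deriv ?_
    field_simp
  have hh1 : ∀ t ∈ Ici (0:ℝ), HasDerivWithinAt (fun u => θ' u ^ 2) (2 * θ' t * θ'' t)
      (Ici 0) t := by
    intro t ht
    have h := (hd2 t ht).pow 2; simp at h; exact h
  have hb1 : ∀ t ∈ Ici (0:ℝ), |2 * θ' t * θ'' t| ≤ 16 + 8 * τ := by
    intro t ht
    rw [abs_le]
    constructor
    · nlinarith [mul_nonneg (by linarith [hθ'hi t ht] : (0:ℝ) ≤ 2 - θ' t)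
        (by linarith [hθ''hi t ht] : (0:ℝ) ≤ 4 + 2*τ - θ'' t),
        mul_nonneg (by linarith [hθ'lo t ht] : (0:ℝ) ≤ 2 + θ' t)
        (by linarith [hθ''lo t ht] : (0:ℝ) ≤ 4 + 2*τ + θ'' t)]
    · nlinarith [mul_nonneg (by linarith [hθ'hi t ht] : (0:ℝ) ≤ 2 - θ' t)
        (by linarith [hθ''lo t ht] : (0:ℝ) ≤ 4 + 2*τ + θ'' t),
        mul_nonneg (by linarith [hθ'lo t ht] : (0:ℝ) ≤ 2 + θ' t)
        (by linarith [hθ''hi t ht] : (0:ℝ) ≤ 4 + 2*τ - θ'' t)]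
  have hsqt : Tendsto (fun u => θ' u ^ 2) atTop (nhds 0) :=
    key_lemma (fun u => θ' u ^ 2) (fun u => 2 * θ' u * θ'' u) (fun u => -E u / τ)
      (16 + 8 * τ) (-(⨅ t, E2 t) / τ) (by linarith) hH1 hh1 hb1 (hEtendsto.neg.div_const τ)
  have hθ'0 : Tendsto θ' atTop (nhds 0) := by
    have habs : Tendsto (fun t => Real.sqrt (θ' t ^ 2)) atTop (nhds 0) := by
      simpa using hsqt.sqrt
    refine tendsto_of_tendsto_of_tendsto_of_le_of_le (by simpa using habs.neg) habs ?_ ?_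
    · intro t
      show -Real.sqrt (θ' t ^ 2) ≤ θ' t
      rw [Real.sqrt_sq_eq_abs]
      exact neg_abs_le _
    · intro t
      show θ' t ≤ Real.sqrt (θ' t ^ 2)
      rw [Real.sqrt_sq_eq_abs]
      exact le_abs_self _
  -- second Barbalat application : θ'' → 0
  have hh2 : ∀ t ∈ Ici (0:ℝ), HasDerivWithinAt θ'' (-(2 * θ t * θ' t) - τ * θ'' t)
      (Ici 0) t := by
    intro t ht
    have hg : HasDerivWithinAt (fun u => 1 - θ u ^ 2 - τ * θ' u)
        (-(2 * θ t * θ' t) - τ * θ'' t) (Ici 0) t := by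
      have h1 := ((hasDerivWithinAt_const t (Ici (0:ℝ)) (1:ℝ)).sub
        ((hd1 t ht).pow 2)).sub ((hd2 t ht).const_mul τ)
      refine h1.congr_deriv ?_
      push_cast
      ring
    exact hg.congr (fun u hu => by have := heq u hu; linarith)
      (by have := heq t ht; linarith)
  have hθle2 : ∀ t : ℝ, 0 ≤ t → θ t ≤ 2 := by
    intro t ht
    nlinarith [hθ2 t ht, hlb t ht, sq_nonneg (θ t - 2)]
  have hb2 : ∀ t ∈ Ici (0:ℝ), |-(2 * θ t * θ' t) - τ * θ'' t| ≤ 8 + 4 * τ + 2 * τ ^ 2 := by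
    intro t ht
    have hp1 : θ t * θ' t ≤ 4 := by
      nlinarith [mul_nonneg (hlb t ht) (by linarith [hθ'hi t ht] : (0:ℝ) ≤ 2 - θ' t),
        hθle2 t ht, hlb t ht]
    have hp2 : -4 ≤ θ t * θ' t := by
      nlinarith [mul_nonneg (hlb t ht) (by linarith [hθ'lo t ht] : (0:ℝ) ≤ θ' t + 2),
        hθle2 t ht, hlb t ht]
    have hp3 : τ * θ'' t ≤ τ * (4 + 2 * τ) := mul_le_mul_of_nonneg_left (hθ''hi t ht) hτ.le
    have hp4 : τ * (-(4 + 2 * τ)) ≤ τ * θ'' t := mul_le_mul_of_nonneg_left (hθ''lo t ht) hτ.le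
    rw [abs_le]
    constructor <;> nlinarith [hp1, hp2, hp3, hp4]
  have hθ''0 : Tendsto θ'' atTop (nhds 0) :=
    key_lemma θ'' (fun t => -(2 * θ t * θ' t) - τ * θ'' t) θ' (8 + 4 * τ + 2 * τ ^ 2) 0
      (by positivity) hd2 hh2 hb2 hθ'0
  -- θ^2 → 1
  have hsq1 : Tendsto (fun t => θ t ^ 2) atTop (nhds 1) := by
    have h1 : Tendsto (fun t => 1 - θ'' t - τ * θ' t) atTop (nhds (1 - 0 - τ * 0)) :=
      (tendsto_const_nhds.sub hθ''0).sub (hθ'0.const_mul τ)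
    rw [show (1:ℝ) - 0 - τ * 0 = 1 by ring] at h1
    refine h1.congr' ?_
    filter_upwards [eventually_ge_atTop (0:ℝ)] with t ht
    have := heq t ht
    linarith
  -- conclusion : θ → 1
  have habs1 : Tendsto (fun t => |θ t ^ 2 - 1|) atTop (nhds 0) := by
    have := (hsq1.sub (tendsto_const_nhds (x := (1:ℝ)))).abs
    simpa using this
  refine tendsto_of_tendsto_of_tendsto_of_le_of_le'
    (g := fun t => 1 - |θ t ^ 2 - 1|) (h := fun t => 1 + |θ t ^ 2 - 1|)
    (by simpa using (tendsto_const_nhds (x := (1:ℝ))).sub habs1)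
    (by simpa using (tendsto_const_nhds (x := (1:ℝ))).add habs1) ?_ ?_
  · filter_upwards [eventually_ge_atTop (0:ℝ)] with t ht
    rcases le_or_gt (θ t) 1 with hle | hgt
    · nlinarith [neg_abs_le (θ t ^ 2 - 1), mul_nonneg (hlb t ht) (by linarith : (0:ℝ) ≤ 1 - θ t)]
    · have := abs_nonneg (θ t ^ 2 - 1)
      linarith
  · filter_upwards [eventually_ge_atTop (0:ℝ)] with t ht
    rcases le_or_gt (θ t) 1 with hle | hgt
    · have := abs_nonneg (θ t ^ 2 - 1)
      linarith
    · nlinarith [le_abs_self (θ t ^ 2 - 1), mul_nonneg (hlb t ht) (by linarith : (0:ℝ) ≤ θ t - 1)]
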